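/- Let k be an algebraically closed field and G ⊆ GL_n(k) a finite subgroup acting irreducibly on kⁿ (the only G-invariant linear subspaces of kⁿ are 0 and kⁿ), such that every group automorphism of G is inner. Then every M ∈ GL_n(k) with M·G·M⁻¹ = G can be written as M = c·g for some scalar c ∈ kˣ and some g ∈ G. -/

import Mathlib

/-- If a finite subgroup `G ⊆ GL_n(k)` over an algebraically closed field acts irreducibly
and every automorphism of `G` is inner, then every element of the normalizer of `G` in
`GL_n(k)` is a scalar multiple of an element of `G`. -/
theorem normalizer_eq_scalars_mul_self
    {k : Type*} [Field k] [IsAlgClosed k] {n : ℕ}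
    (G : Subgroup (Matrix.GeneralLinearGroup (Fin n) k)) (hfin : Finite G)
    (hirr : ∀ W : Submodule k (Fin n → k),
      (∀ g ∈ G, ∀ v ∈ W, Matrix.mulVec (g : Matrix (Fin n) (Fin n) k) v ∈ W) →
      W = ⊥ ∨ W = ⊤)
    (hinner : ∀ α : G ≃* G, ∃ g : G, ∀ h : G, α h = g * h * g⁻¹) :
    ∀ M : Matrix.GeneralLinearGroup (Fin n) k, M ∈ Subgroup.normalizer (G : Set (Matrix.GeneralLinearGroup (Fin n) k)) →
      ∃ (c : kˣ) (g : Matrix.GeneralLinearGroup (Fin n) k), g ∈ G ∧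
        (M : Matrix (Fin n) (Fin n) k) = (c : k) • (g : Matrix (Fin n) (Fin n) k) := by
  intro M hM
  rcases Nat.eq_zero_or_pos n with hn | hn
  · subst hn
    exact ⟨1, 1, G.one_mem, Subsingleton.elim _ _⟩
  rw [Subgroup.mem_normalizer_iff] at hM
  haveI : Nonempty (Fin n) := ⟨⟨0, hn⟩⟩
  -- conjugation by M as an automorphism of G
  let α : G ≃* G :=
    { toFun := fun h => ⟨M * h * M⁻¹, (hM h).mp h.2⟩
      invFun := fun h => ⟨M⁻¹ * h * M, by
        have := (hM (M⁻¹ * (h : Matrix.GeneralLinearGroup (Fin n) k) * M)).mpr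
        apply this
        have : M * (M⁻¹ * (h : Matrix.GeneralLinearGroup (Fin n) k) * M) * M⁻¹ = h := by
          group
        rw [this]; exact h.2⟩
      left_inv := fun h => Subtype.ext (show M⁻¹ * (M * ↑h * M⁻¹) * M = ↑h by group)
      right_inv := fun h => Subtype.ext (show M * (M⁻¹ * ↑h * M) * M⁻¹ = ↑h by group)
      map_mul' := fun a b => Subtype.ext
        (show M * (↑a * ↑b) * M⁻¹ = (M * ↑a * M⁻¹) * (M * ↑b * M⁻¹) by group) }
  obtain ⟨g₀, hg₀⟩ := hinner α
  -- N := g₀⁻¹ * M commutes with every element of G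
  set N : Matrix.GeneralLinearGroup (Fin n) k := (g₀ : Matrix.GeneralLinearGroup (Fin n) k)⁻¹ * M with hN
  have hcomm : ∀ h ∈ G, N * h = h * N := by
    intro h hh
    have := congrArg Subtype.val (hg₀ ⟨h, hh⟩)
    simp only [α, MulEquiv.coe_mk, Equiv.coe_fn_mk, Subgroup.coe_mul,
      InvMemClass.coe_inv] at this
    -- this : M * h * M⁻¹ = g₀ * h * g₀⁻¹
    have h1 : (g₀ : Matrix.GeneralLinearGroup (Fin n) k)⁻¹ * (M * h * M⁻¹) * (g₀ : Matrix.GeneralLinearGroup (Fin n) k) * (g₀ : Matrix.GeneralLinearGroup (Fin n) k)⁻¹ * M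
        = (g₀ : Matrix.GeneralLinearGroup (Fin n) k)⁻¹ * (↑g₀ * h * (↑g₀)⁻¹) * ↑g₀ * (↑g₀ : Matrix.GeneralLinearGroup (Fin n) k)⁻¹ * M := by
      rw [this]
    calc N * h = (↑g₀)⁻¹ * (M * h * M⁻¹) * ↑g₀ * (↑g₀ : Matrix.GeneralLinearGroup (Fin n) k)⁻¹ * M := by
            rw [hN]; group
      _ = (↑g₀)⁻¹ * (↑g₀ * h * (↑g₀)⁻¹) * ↑g₀ * (↑g₀ : Matrix.GeneralLinearGroup (Fin n) k)⁻¹ * M := h1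
      _ = h * N := by rw [hN]; group
  -- Schur: N is scalar
  set N' : Matrix (Fin n) (Fin n) k := (N : Matrix (Fin n) (Fin n) k) with hN'
  let f : Module.End k (Fin n → k) := Matrix.toLin' N'
  obtain ⟨c, hc⟩ := Module.End.exists_eigenvalue f
  have hW := hirr (Module.End.eigenspace f c)
  have hinv : ∀ g ∈ G, ∀ v ∈ Module.End.eigenspace f c,
      Matrix.mulVec (g : Matrix (Fin n) (Fin n) k) v ∈ Module.End.eigenspace f c := by
    intro g hg v hv
    rw [Module.End.mem_eigenspace_iff] at hv ⊢
    have hcm : N' * (g : Matrix (Fin n) (Fin n) k) = (g : Matrix (Fin n) (Fin n) k) * N' := by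
      have := congrArg Units.val (hcomm g hg)
      simpa using this
    have : f v = Matrix.mulVec N' v := by simp [f, Matrix.toLin'_apply]
    calc f (Matrix.mulVec (g : Matrix (Fin n) (Fin n) k) v)
        = Matrix.mulVec N' (Matrix.mulVec (g : Matrix (Fin n) (Fin n) k) v) := by
          simp [f, Matrix.toLin'_apply]
      _ = Matrix.mulVec (N' * (g : Matrix (Fin n) (Fin n) k)) v := by
          rw [Matrix.mulVec_mulVec]
      _ = Matrix.mulVec ((g : Matrix (Fin n) (Fin n) k) * N') v := by rw [hcm]
      _ = Matrix.mulVec (g : Matrix (Fin n) (Fin n) k) (Matrix.mulVec N' v) := by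
          rw [Matrix.mulVec_mulVec]
      _ = Matrix.mulVec (g : Matrix (Fin n) (Fin n) k) (f v) := by
          simp [f, Matrix.toLin'_apply]
      _ = c • Matrix.mulVec (g : Matrix (Fin n) (Fin n) k) v := by
          rw [hv, Matrix.mulVec_smul]
  have hWtop : Module.End.eigenspace f c = ⊤ := by
    rcases hW hinv with h | h
    · exact absurd h hc
    · exact h
  have hall : ∀ v : Fin n → k, f v = c • v := by
    intro v
    have : v ∈ Module.End.eigenspace f c := hWtop ▸ Submodule.mem_top
    exact Module.End.mem_eigenspace_iff.mp this
  have hNsc : N' = c • (1 : Matrix (Fin n) (Fin n) k) := by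
    ext i j
    have h1 := congrFun (hall (Pi.single j 1)) i
    simp only [f, Matrix.toLin'_apply, Matrix.mulVec_single, mul_one,
      Pi.smul_apply, smul_eq_mul] at h1
    rw [show N' i j = c * (Pi.single j (1 : k) : Fin n → k) i by simpa [Matrix.col] using h1]
    simp [Matrix.one_apply, Pi.single_apply, mul_comm]
  have hc0 : c ≠ 0 := by
    intro h
    rw [h, zero_smul] at hNsc
    have : IsUnit N' := N.isUnit
    rw [hNsc] at this
    exact not_isUnit_zero this
  refine ⟨Units.mk0 c hc0, g₀, g₀.2, ?_⟩
  have hM' : M = (g₀ : Matrix.GeneralLinearGroup (Fin n) k) * N := by rw [hN]; group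
  have := congrArg Units.val hM'
  simp only [Units.val_mul] at this
  rw [this, ← hN', hNsc]
  simp [Matrix.mul_smul]
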